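/- arXiv:2410.23913 — 5 statements merged into one kernel-verified Lean document; each statement's English description precedes it below -/
import Mathlib

section
/- Let π, π' ∈ 𝒢 and α, β be outcomes. (i) If α ≽_π β and α ≽_{π'} β then α ≽_{π∘π'} β. (ii) If α ≽_π β and α ≻_{π'} β then α ≻_{π∘π'} β and α ≻_{π'∘π} β. (iii) If α ≡_π β then: α ≽_{π'} β if and only if α ≽_{π∘π'} β, and α ≻_{π'} β if and only if α ≻_{π∘π'} β. -/
namespace LexPref

/-- A pair consisting of a variable and a total order (as a binary relation) on its domain. -/
structure LexPair (ι : Type*) (D : ι → Type*) where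
  var : ι
  ord : D var → D var → Prop
  isLin : IsLinearOrder (D var) ord

/-- An outcome assigns a value to every variable. -/
abbrev Outcome (ι : Type*) (D : ι → Type*) := ∀ i, D i

/-- A lexicographic model: a list of pairs (variable, total order) with pairwise
distinct variables. -/
abbrev LexModel (ι : Type*) (D : ι → Type*) :=
  { l : List (LexPair ι D) // (l.map LexPair.var).Nodup }

variable {ι : Type*} {D : ι → Type*}

/-- The list of variables occurring in a lex model. -/
def vars (π : LexModel ι D) : List ι := π.1.map LexPair.var

/-- The empty lex model. -/
def emptyModel : LexModel ι D := ⟨[], List.nodup_nil⟩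

/-- Composition of lex models: `π` followed by the pairs of `π'` whose variable does
not occur in `π`. -/
def comp [DecidableEq ι] (π π' : LexModel ι D) : LexModel ι D :=
  ⟨π.1 ++ π'.1.filter (fun p => decide (p.var ∉ vars π)), by
    have h1 : (π'.1.filter (fun p => decide (p.var ∉ vars π))).Sublist π'.1 :=
      List.filter_sublist
    rw [List.map_append, List.nodup_append]
    refine ⟨π.2, (h1.map LexPair.var).nodup π'.2, ?_⟩
    intro x hx y hy
    obtain ⟨p, hp, rfl⟩ := List.mem_map.mp hy
    have hd := List.of_mem_filter hp
    simp only [decide_eq_true_eq] at hd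
    rintro rfl
    exact hd hx⟩

/-- `π'` extends `π`: `π' ≠ π` and the sequence `π'` begins with `π`. -/
def Extends (π' π : LexModel ι D) : Prop := π' ≠ π ∧ π.1 <+: π'.1

/-- `π' ⊒ π`: `π'` extends or equals `π`. -/
def ExtendsEq (π' π : LexModel ι D) : Prop := π.1 <+: π'.1

/-- Lexicographic weak preference along a list of pairs. -/
def prefList : List (LexPair ι D) → Outcome ι D → Outcome ι D → Prop
  | [], _, _ => True
  | p :: rest, α, β =>
      (α p.var ≠ β p.var ∧ p.ord (α p.var) (β p.var)) ∨
      (α p.var = β p.var ∧ prefList rest α β)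

/-- Lexicographic strict preference along a list of pairs. -/
def sprefList : List (LexPair ι D) → Outcome ι D → Outcome ι D → Prop
  | [], _, _ => False
  | p :: rest, α, β =>
      (α p.var ≠ β p.var ∧ p.ord (α p.var) (β p.var)) ∨
      (α p.var = β p.var ∧ sprefList rest α β)

/-- `α ≽_π β`. -/
def pref (π : LexModel ι D) (α β : Outcome ι D) : Prop := prefList π.1 α β

/-- `α ≻_π β`. -/
def spref (π : LexModel ι D) (α β : Outcome ι D) : Prop := sprefList π.1 α β

/-- `α ≡_π β`: the outcomes agree on all variables of `π`. -/
def eqOn (π : LexModel ι D) (α β : Outcome ι D) : Prop := ∀ X ∈ vars π, α X = β X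

section Language

variable {L : Type*} (sat : LexModel ι D → L → Prop)

/-- `π ⊨ Γ`. -/
def satSet (π : LexModel ι D) (Γ : Set L) : Prop := ∀ φ ∈ Γ, sat π φ

/-- `Γ` is consistent: some lex model satisfies it. -/
def Consistent (Γ : Set L) : Prop := ∃ π, satSet sat π Γ

/-- `π ⊨* φ`: some `π' ⊒ π` satisfies `φ`. -/
def satStar (π : LexModel ι D) (φ : L) : Prop := ∃ π', ExtendsEq π' π ∧ sat π' φ

/-- `π ⊨* Γ`. -/
def satStarSet (π : LexModel ι D) (Γ : Set L) : Prop := ∀ φ ∈ Γ, satStar sat π φ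

/-- `φ` is compositional. -/
def CompositionalStmt [DecidableEq ι] (φ : L) : Prop :=
  ∀ π π', sat π φ → sat π' φ → sat (comp π π') φ

/-- `Γ` is compositional. -/
def Compositional [DecidableEq ι] (Γ : Set L) : Prop :=
  ∀ φ ∈ Γ, CompositionalStmt sat φ

/-- `φ` is strongly compositional. -/
def StronglyCompositionalStmt [DecidableEq ι] (φ : L) : Prop :=
  ∀ π π', satStar sat π φ → sat π' φ → sat (comp π π') φ

/-- `Γ` is strongly compositional. -/
def StronglyCompositional [DecidableEq ι] (Γ : Set L) : Prop :=
  ∀ φ ∈ Γ, StronglyCompositionalStmt sat φ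

/-- `π` is a maximal model of `Γ`. -/
def MaximalModel (π : LexModel ι D) (Γ : Set L) : Prop :=
  satSet sat π Γ ∧ ∀ π', Extends π' π → ¬ satSet sat π' Γ

/-- `π` is a maximal `⊨*`-model of `Γ`. -/
def MaximalStarModel (π : LexModel ι D) (Γ : Set L) : Prop :=
  satStarSet sat π Γ ∧ ∀ π', Extends π' π → ¬ satStarSet sat π' Γ

end Language

/-- `O_σ(𝒜)`: the optimal elements of `A` with respect to `σ`. -/
def opt (σ : LexModel ι D) (A : Set (Outcome ι D)) : Set (Outcome ι D) :=
  {α ∈ A | ∀ β ∈ A, pref σ α β}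

/-- Iterated optimisation `𝒜_{π₁,…,π_k}`. -/
def iterOpt : List (LexModel ι D) → Set (Outcome ι D) → Set (Outcome ι D)
  | [], A => A
  | σ :: rest, A => iterOpt rest (opt σ A)

end LexPref

namespace LexPref

section Aux

variable {ι : Type*} {D : ι → Type*} {α β : Outcome ι D}

lemma sprefList_prefList {l : List (LexPair ι D)} (h : sprefList l α β) :
    prefList l α β := by
  induction l with
  | nil => exact h.elim
  | cons p rest ih =>
    rcases h with h | ⟨h1, h2⟩
    · exact Or.inl h
    · exact Or.inr ⟨h1, ih h2⟩

lemma prefList_append {l1 l2 : List (LexPair ι D)} :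
    prefList (l1 ++ l2) α β ↔
      sprefList l1 α β ∨ ((∀ p ∈ l1, α p.var = β p.var) ∧ prefList l2 α β) := by
  induction l1 with
  | nil => simp [prefList, sprefList]
  | cons p rest ih =>
    constructor
    · rintro (h | ⟨he, h⟩)
      · exact Or.inl (Or.inl h)
      · rcases ih.mp h with h' | ⟨ha, hp⟩
        · exact Or.inl (Or.inr ⟨he, h'⟩)
        · exact Or.inr ⟨fun q hq => (List.mem_cons.mp hq).elim (fun e => e ▸ he) (ha q), hp⟩
    · rintro ((h | ⟨he, h⟩) | ⟨ha, hp⟩)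
      · exact Or.inl h
      · exact Or.inr ⟨he, ih.mpr (Or.inl h)⟩
      · exact Or.inr ⟨ha p (List.mem_cons_self),
          ih.mpr (Or.inr ⟨fun q hq => ha q (List.mem_cons_of_mem _ hq), hp⟩)⟩

lemma sprefList_append {l1 l2 : List (LexPair ι D)} :
    sprefList (l1 ++ l2) α β ↔
      sprefList l1 α β ∨ ((∀ p ∈ l1, α p.var = β p.var) ∧ sprefList l2 α β) := by
  induction l1 with
  | nil => simp [sprefList]
  | cons p rest ih =>
    constructor
    · rintro (h | ⟨he, h⟩)
      · exact Or.inl (Or.inl h)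
      · rcases ih.mp h with h' | ⟨ha, hp⟩
        · exact Or.inl (Or.inr ⟨he, h'⟩)
        · exact Or.inr ⟨fun q hq => (List.mem_cons.mp hq).elim (fun e => e ▸ he) (ha q), hp⟩
    · rintro ((h | ⟨he, h⟩) | ⟨ha, hp⟩)
      · exact Or.inl h
      · exact Or.inr ⟨he, ih.mpr (Or.inl h)⟩
      · exact Or.inr ⟨ha p (List.mem_cons_self),
          ih.mpr (Or.inr ⟨fun q hq => ha q (List.mem_cons_of_mem _ hq), hp⟩)⟩

lemma prefList_filter {l : List (LexPair ι D)} {q : LexPair ι D → Bool}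
    (h : ∀ p ∈ l, q p = false → α p.var = β p.var) :
    prefList (l.filter q) α β ↔ prefList l α β := by
  induction l with
  | nil => simp
  | cons p rest ih =>
    have ih' := ih (fun r hr => h r (List.mem_cons_of_mem _ hr))
    by_cases hq : q p
    · rw [List.filter_cons_of_pos hq]
      simp only [prefList, ih']
    · rw [List.filter_cons_of_neg (by simpa using hq)]
      have he : α p.var = β p.var := h p (List.mem_cons_self) (by simpa using hq)
      simp only [prefList, ih', he, ne_eq, not_true_eq_false, false_and, false_or,
        true_and]

lemma sprefList_filter {l : List (LexPair ι D)} {q : LexPair ι D → Bool}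
    (h : ∀ p ∈ l, q p = false → α p.var = β p.var) :
    sprefList (l.filter q) α β ↔ sprefList l α β := by
  induction l with
  | nil => simp
  | cons p rest ih =>
    have ih' := ih (fun r hr => h r (List.mem_cons_of_mem _ hr))
    by_cases hq : q p
    · rw [List.filter_cons_of_pos hq]
      simp only [sprefList, ih']
    · rw [List.filter_cons_of_neg (by simpa using hq)]
      have he : α p.var = β p.var := h p (List.mem_cons_self) (by simpa using hq)
      simp only [sprefList, ih', he, ne_eq, not_true_eq_false, false_and, false_or,
        true_and]

lemma pref_cases {l : List (LexPair ι D)} (h : prefList l α β) :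
    sprefList l α β ∨ ∀ p ∈ l, α p.var = β p.var := by
  induction l with
  | nil => exact Or.inr (by simp)
  | cons p rest ih =>
    rcases h with h | ⟨he, h⟩
    · exact Or.inl (Or.inl h)
    · rcases ih h with h' | h'
      · exact Or.inl (Or.inr ⟨he, h'⟩)
      · exact Or.inr fun q hq => (List.mem_cons.mp hq).elim (fun e => e ▸ he) (h' q)

lemma not_sprefList_of_agree {l : List (LexPair ι D)}
    (ha : ∀ p ∈ l, α p.var = β p.var) : ¬ sprefList l α β := by
  induction l with
  | nil => exact id
  | cons p rest ih =>
    rintro (⟨hne, _⟩ | ⟨_, hs⟩)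
    · exact hne (ha p (List.mem_cons_self))
    · exact ih (fun q hq => ha q (List.mem_cons_of_mem _ hq)) hs

lemma eqOn_iff_agree {π : LexModel ι D} :
    eqOn π α β ↔ ∀ p ∈ π.1, α p.var = β p.var := by
  constructor
  · intro h p hp
    exact h _ (List.mem_map_of_mem hp)
  · intro h X hX
    obtain ⟨p, hp, rfl⟩ := List.mem_map.mp hX
    exact h p hp

lemma filter_agree [DecidableEq ι] {π : LexModel ι D} (h : eqOn π α β)
    (p : LexPair ι D)
    (hq : decide (p.var ∉ vars π) = false) : α p.var = β p.var :=
  h p.var (by simpa using hq)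

end Aux

/-- key composition properties of `≽`, `≻` and `≡`. -/
theorem comp_pref_properties {ι : Type*} {D : ι → Type*} [DecidableEq ι]
    [Fintype ι] [∀ i, Fintype (D i)]
    (π π' : LexModel ι D) (α β : Outcome ι D) :
    (pref π α β → pref π' α β → pref (comp π π') α β) ∧
    (pref π α β → spref π' α β →
      spref (comp π π') α β ∧ spref (comp π' π) α β) ∧
    (eqOn π α β →
      ((pref π' α β ↔ pref (comp π π') α β) ∧
       (spref π' α β ↔ spref (comp π π') α β))) := by
  have key : ∀ γ δ : LexModel ι D, eqOn γ α β → ∀ p ∈ γ.1, α p.var = β p.var :=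
    fun γ δ h => eqOn_iff_agree.mp h
  refine ⟨?_, ?_, ?_⟩
  · intro h h'
    rcases pref_cases h with hs | ha
    · exact prefList_append.mpr (Or.inl hs)
    · refine prefList_append.mpr (Or.inr ⟨ha, ?_⟩)
      rw [prefList_filter (fun p _ => filter_agree (eqOn_iff_agree.mpr ha) p)]
      exact h'
  · intro h h'
    constructor
    · rcases pref_cases h with hs | ha
      · exact sprefList_append.mpr (Or.inl hs)
      · refine sprefList_append.mpr (Or.inr ⟨ha, ?_⟩)
        rw [sprefList_filter (fun p _ => filter_agree (eqOn_iff_agree.mpr ha) p)]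
        exact h'
    · exact sprefList_append.mpr (Or.inl h')
  · intro h
    have ha := eqOn_iff_agree.mp h
    have hns : ¬ sprefList π.1 α β := not_sprefList_of_agree ha
    constructor
    · rw [pref, pref, comp, prefList_append,
        prefList_filter (fun p _ => filter_agree h p)]
      tauto
    · rw [spref, spref, comp, sprefList_append,
        sprefList_filter (fun p _ => filter_agree h p)]
      tauto

end LexPref
end

section
/- Let Γ ⊆ ℒ and ψ ∈ ℒ be such that for all π ∈ 𝒢, π ⊨ ψ if and only if π ⊨ Γ. If Γ is compositional then ψ is compositional. If Γ is strongly compositional then ψ is strongly compositional and, for all π ∈ 𝒢, π ⊨* ψ if and only if (π ⊨* Γ and Γ is consistent). -/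
namespace LexPref

/-- if `ψ` is satisfied exactly by the models of `Γ`, then
compositionality (resp. strong compositionality) of `Γ` transfers to `ψ`,
and in the strong case `π ⊨* ψ ↔ (π ⊨* Γ ∧ Γ consistent)`. -/
theorem conjunction_compositional {ι : Type*} {D : ι → Type*} [DecidableEq ι]
    [Fintype ι] [∀ i, Fintype (D i)] {L : Type*}
    (sat : LexModel ι D → L → Prop) (Γ : Set L) (ψ : L)
    (h : ∀ π, sat π ψ ↔ satSet sat π Γ) :
    (Compositional sat Γ → CompositionalStmt sat ψ) ∧
    (StronglyCompositional sat Γ →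
      StronglyCompositionalStmt sat ψ ∧
      ∀ π, (satStar sat π ψ ↔ (satStarSet sat π Γ ∧ Consistent sat Γ))) := by
  constructor
  · intro hΓ π π' hπ hπ'
    rw [h] at hπ hπ' ⊢
    intro φ hφ
    exact hΓ φ hφ π π' (hπ φ hφ) (hπ' φ hφ)
  · intro hΓ
    constructor
    · intro π π' hstar hπ'
      rw [h]
      obtain ⟨π'', hext, hπ''⟩ := hstar
      rw [h] at hπ'' hπ'
      intro φ hφ
      exact hΓ φ hφ π π' ⟨π'', hext, hπ'' φ hφ⟩ (hπ' φ hφ)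
    · intro π
      constructor
      · rintro ⟨π', hext, hπ'⟩
        rw [h] at hπ'
        exact ⟨fun φ hφ => ⟨π', hext, hπ' φ hφ⟩, ⟨π', hπ'⟩⟩
      · rintro ⟨hstar, π₀, hπ₀⟩
        refine ⟨comp π π₀, ?_, ?_⟩
        · exact List.prefix_append _ _
        · rw [h]
          intro φ hφ
          exact hΓ φ hφ π π₀ (hstar φ hφ) (hπ₀ φ hφ)

end LexPref
end

section
/- Let Γ ⊆ ℒ be consistent and compositional, and let V^Γ denote V_π for any maximal model π of Γ (this is well-defined since all maximal models of Γ involve the same set of variables). Then for any outcomes α, β: (α ≡_{π'} β holds for every model π' of Γ) if and only if α and β agree on all variables of V^Γ. -/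
namespace LexPref

/-- for consistent compositional `Γ` with maximal model `π`
(so that `V^Γ = V_π`), two outcomes are equivalent in every model of `Γ`
iff they agree on all variables of `V^Γ`. -/
theorem equiv_iff_agree_on_VGamma {ι : Type*} {D : ι → Type*} [DecidableEq ι]
    [Fintype ι] [∀ i, Fintype (D i)] {L : Type*}
    (sat : LexModel ι D → L → Prop) (Γ : Set L)
    (hcons : Consistent sat Γ) (hcomp : Compositional sat Γ)
    (π : LexModel ι D) (hmax : MaximalModel sat π Γ)
    (α β : Outcome ι D) :
    (∀ π', satSet sat π' Γ → eqOn π' α β) ↔ (∀ X ∈ vars π, α X = β X) := by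
  constructor
  · intro h X hX
    exact h π hmax.1 X hX
  · intro hagree π' hπ' X hX
    -- it suffices to show X ∈ vars π
    apply hagree
    by_contra hXπ
    -- then comp π π' strictly extends π and models Γ, contradicting maximality
    obtain ⟨p, hp, hpv⟩ := List.mem_map.mp hX
    have hpf : p ∈ π'.1.filter (fun p => decide (p.var ∉ vars π)) := by
      apply List.mem_filter.mpr
      refine ⟨hp, ?_⟩
      simp [hpv, hXπ]
    have hne : comp π π' ≠ π := by
      intro heq
      have : (comp π π').1.length = π.1.length := by rw [heq]
      simp only [comp, List.length_append] at this
      have hpos : 0 < (π'.1.filter (fun p => decide (p.var ∉ vars π))).length :=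
        List.length_pos_iff.mpr (List.ne_nil_of_mem hpf)
      omega
    have hext : Extends (comp π π') π := ⟨hne, List.prefix_append _ _⟩
    have hsat : satSet sat (comp π π') Γ := fun φ hφ =>
      hcomp φ hφ π π' (hmax.1 φ hφ) (hπ' φ hφ)
    exact hmax.2 _ hext hsat

end LexPref
end

section
/- If φ ∈ ℒ is strongly compositional, then for all π, π' ∈ 𝒢: π ⊨* φ and π' ⊨* φ imply π∘π' ⊨* φ. Consequently, if Γ ⊆ ℒ is strongly compositional then π ⊨* Γ and π' ⊨* Γ imply π∘π' ⊨* Γ. -/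
namespace LexPref

/-- strong compositionality yields a composition property for `⊨*`,
both for a single statement and for a set of statements. -/
theorem satStar_composition {ι : Type*} {D : ι → Type*} [DecidableEq ι]
    [Fintype ι] [∀ i, Fintype (D i)] {L : Type*}
    (sat : LexModel ι D → L → Prop) :
    (∀ φ : L, StronglyCompositionalStmt sat φ →
      ∀ π π', satStar sat π φ → satStar sat π' φ → satStar sat (comp π π') φ) ∧
    (∀ Γ : Set L, StronglyCompositional sat Γ →
      ∀ π π', satStarSet sat π Γ → satStarSet sat π' Γ →
        satStarSet sat (comp π π') Γ) := by
  have main : ∀ φ : L, StronglyCompositionalStmt sat φ →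
      ∀ π π', satStar sat π φ → satStar sat π' φ → satStar sat (comp π π') φ := by
    intro φ hsc π π' hπ hπ'
    obtain ⟨π'', hext, hsat⟩ := hπ'
    refine ⟨comp π π'', ?_, hsc π π'' hπ hsat⟩
    obtain ⟨t, ht⟩ := hext
    show (comp π π').1 <+: (comp π π'').1
    simp only [comp, ← ht, List.filter_append]
    exact ⟨List.filter (fun p => decide (p.var ∉ vars π)) t, by simp [List.append_assoc]⟩
  exact ⟨main, fun Γ hΓ π π' h h' φ hφ => main φ (hΓ φ hφ) π π' (h φ hφ) (h' φ hφ)⟩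

end LexPref
end

section
/- Assume Γ ⊆ ℒ is strongly compositional and let π, π' be maximal ⊨*-models of Γ. Then: (i) for every φ ∈ Γ, π ⊨ φ if and only if π' ⊨ φ; and (ii) if Γ is consistent, then the set of maximal models of Γ equals the set of maximal ⊨*-models of Γ. -/
namespace LexPref

section Aux

variable {ι : Type*} {D : ι → Type*} [DecidableEq ι] {L : Type*}
  {sat : LexModel ι D → L → Prop} {Γ : Set L}

lemma sat_satStar {π : LexModel ι D} {φ : L} (h : sat π φ) : satStar sat π φ :=
  ⟨π, List.prefix_refl _, h⟩

lemma extendsEq_comp (π σ : LexModel ι D) : ExtendsEq (comp π σ) π :=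
  List.prefix_append _ _

lemma maxstar_eq {π σ : LexModel ι D}
    (hπ : MaximalStarModel sat π Γ) (hext : ExtendsEq σ π)
    (hσ : satStarSet sat σ Γ) : σ = π := by
  by_contra h
  exact hπ.2 σ ⟨h, hext⟩ hσ

lemma comp_satStarSet (hsc : StronglyCompositional sat Γ)
    {π π' : LexModel ι D} (hπ : satStarSet sat π Γ) (hπ' : satStarSet sat π' Γ) :
    satStarSet sat (comp π π') Γ := by
  intro ψ hψ
  obtain ⟨τ, hτext, hτ⟩ := hπ' ψ hψ
  refine ⟨comp π τ, ?_, hsc ψ hψ π τ (hπ ψ hψ) hτ⟩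
  have hf : (π'.1.filter (fun p => decide (p.var ∉ vars π))) <+:
      (τ.1.filter (fun p => decide (p.var ∉ vars π))) :=
    hτext.filter _
  obtain ⟨t, ht⟩ := hf
  exact ⟨t, by simp only [comp, ← ht, List.append_assoc]⟩

lemma comp_satSet (hsc : StronglyCompositional sat Γ)
    {π ρ : LexModel ι D} (hπ : satStarSet sat π Γ) (hρ : satSet sat ρ Γ) :
    satSet sat (comp π ρ) Γ :=
  fun φ hφ => hsc φ hφ π ρ (hπ φ hφ) (hρ φ hφ)

lemma sat_of_other_sat (hsc : StronglyCompositional sat Γ)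
    {π π' : LexModel ι D} (hπ : MaximalStarModel sat π Γ)
    (hπ' : satStarSet sat π' Γ) {φ : L} (hφ : φ ∈ Γ) (h : sat π' φ) :
    sat π φ := by
  have hcomp := comp_satStarSet hsc hπ.1 hπ'
  have heq := maxstar_eq hπ (extendsEq_comp π π') hcomp
  have : sat (comp π π') φ := hsc φ hφ π π' (hπ.1 φ hφ) h
  rwa [heq] at this

lemma maxstar_satSet (hsc : StronglyCompositional sat Γ)
    {τ : LexModel ι D} (hτ : MaximalStarModel sat τ Γ)
    {ρ : LexModel ι D} (hρ : satSet sat ρ Γ) : satSet sat τ Γ := by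
  have h1 : satSet sat (comp τ ρ) Γ := comp_satSet hsc hτ.1 hρ
  have h2 : satStarSet sat (comp τ ρ) Γ := fun φ hφ => sat_satStar (h1 φ hφ)
  have heq := maxstar_eq hτ (extendsEq_comp τ ρ) h2
  rwa [heq] at h1

end Aux

/-- for strongly compositional `Γ` and maximal `⊨*`-models `π, π'`:
they satisfy the same elements of `Γ`, and if `Γ` is consistent then the maximal
models of `Γ` are exactly the maximal `⊨*`-models of `Γ`. -/
theorem maximal_star_models_agree {ι : Type*} {D : ι → Type*} [DecidableEq ι]
    [Fintype ι] [∀ i, Fintype (D i)] {L : Type*}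
    (sat : LexModel ι D → L → Prop) (Γ : Set L)
    (hsc : StronglyCompositional sat Γ)
    (π π' : LexModel ι D)
    (hπ : MaximalStarModel sat π Γ) (hπ' : MaximalStarModel sat π' Γ) :
    (∀ φ ∈ Γ, sat π φ ↔ sat π' φ) ∧
    (Consistent sat Γ →
      ∀ τ, MaximalModel sat τ Γ ↔ MaximalStarModel sat τ Γ) := by
  constructor
  · intro φ hφ
    exact ⟨fun h => sat_of_other_sat hsc hπ' hπ.1 hφ h,
           fun h => sat_of_other_sat hsc hπ hπ'.1 hφ h⟩
  · rintro ⟨ρ, hρ⟩ τ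
    constructor
    · rintro ⟨hτsat, hτmax⟩
      refine ⟨fun φ hφ => sat_satStar (hτsat φ hφ), ?_⟩
      rintro σ ⟨hne, hpre⟩ hσstar
      have h1 : satSet sat (comp σ ρ) Γ := comp_satSet hsc hσstar hρ
      have hpre2 : τ.1 <+: (comp σ ρ).1 := hpre.trans (extendsEq_comp σ ρ)
      have hne2 : comp σ ρ ≠ τ := by
        intro h
        apply hne
        have hσpre : σ.1 <+: τ.1 := by
          rw [← h]; exact extendsEq_comp σ ρ
        exact Subtype.ext (hσpre.sublist.antisymm hpre.sublist)
      exact hτmax (comp σ ρ) ⟨hne2, hpre2⟩ h1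
    · rintro hτ
      have hτsat : satSet sat τ Γ := maxstar_satSet hsc hτ hρ
      exact ⟨hτsat, fun σ hext hσ =>
        hτ.2 σ hext (fun φ hφ => sat_satStar (hσ φ hφ))⟩

end LexPref
end
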